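/- Gessel–Viennot determinant via the Bethe Ansatz (Theorem 2): under the one-walk Bethe hypotheses, for every N ≥ 1, t ≥ 0, y^i ∈ U^{p'}_L(N) and y^f ∈ U^p_L(N) (where p' = p if t is even and p' is the opposite parity to p if t is odd), the N-walk strip generating function equals the determinant of one-walk strip generating functions: Z^N_t(y^i → y^f) = det( Z^S_t(y^i_α → y^f_β) )_{α,β = 1,…,N}. -/

import Mathlib

open Finset BigOperators
open scoped Classical

noncomputable section

/-- The odd sites of the strip: `{y : 1 ≤ y ≤ L, y odd}`. -/
def SetO (L : ℤ) : Finset ℤ := (Finset.Icc 1 L).filter (fun y => Odd y)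

/-- The even sites of the strip: `{y : 0 ≤ y ≤ L, y even}`. -/
def SetE (L : ℤ) : Finset ℤ := (Finset.Icc 0 L).filter (fun y => Even y)

/-- Parity-indexed site sets: `true ↦ odd`, `false ↦ even`. -/
def Sp (L : ℤ) : Bool → Finset ℤ := fun p => if p then SetO L else SetE L

/-- Strictly increasing `N`-tuples with entries in `S`. -/
def UU {α : Type*} [LinearOrder α] (S : Finset α) (N : ℕ) : Finset (Fin N → α) :=
  (Fintype.piFinset (fun _ => S)).filter (fun y => ∀ i j : Fin N, i < j → y i < y j)

/-- One-step transfer matrix entry: `w y y'` when `|y - y'| = 1`, and `0` otherwise. -/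
def T1 (w : ℤ → ℤ → ℂ) (y y' : ℤ) : ℂ := if |y - y'| = 1 then w y y' else 0

/-- `N`-walk transfer matrix entry: product of one-step entries. -/
def TN (w : ℤ → ℤ → ℂ) {N : ℕ} (y y' : Fin N → ℤ) : ℂ := ∏ i, T1 w (y i) (y' i)

/-- Powers of a matrix indexed by a finite set `S`. -/
def matPow {α : Type*} [DecidableEq α] (S : Finset α) (M : α → α → ℂ) : ℕ → α → α → ℂ
  | 0 => fun y y' => if y = y' then 1 else 0
  | r + 1 => fun y y' => ∑ z ∈ S, matPow S M r y z * M z y'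

/-- Weight of a family of `N` walks of length `t`. -/
def walkWeight (w : ℤ → ℤ → ℂ) (v : ℤ → ℂ) {N t : ℕ} (y : Fin N → Fin (t + 1) → ℤ) : ℂ :=
  (∏ j, v (y j 0)) * ∏ m : Fin t, ∏ j, w (y j m.castSucc) (y j m.succ)

/-- The constraints on families of non-intersecting walks in the strip `0 ≤ y ≤ L`. -/
def stripCond (L : ℤ) {N t : ℕ} (yi yf : Fin N → ℤ) (y : Fin N → Fin (t + 1) → ℤ) : Prop :=
  (∀ j, y j 0 = yi j) ∧ (∀ j, y j (Fin.last t) = yf j) ∧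
    (∀ j m, 0 ≤ y j m ∧ y j m ≤ L) ∧
    (∀ j, ∀ m : Fin t, y j m.succ = y j m.castSucc + 1 ∨ y j m.succ = y j m.castSucc - 1) ∧
    (∀ m, ∀ i j : Fin N, i < j → y i m < y j m)

/-- The `N`-walk strip generating function `Z^N_t(y^i → y^f)`. -/
def Zgen (L : ℤ) (w : ℤ → ℤ → ℂ) (v : ℤ → ℂ) (N t : ℕ) (yi yf : Fin N → ℤ) : ℂ :=
  ∑ y ∈ (Fintype.piFinset
      (fun _ : Fin N => Fintype.piFinset (fun _ : Fin (t + 1) => Finset.Icc 0 L))).filter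
        (stripCond L yi yf), walkWeight w v y

/-- The constraints on families of non-intersecting walks with a single wall `y ≥ 0`. -/
def barCond {N t : ℕ} (yi yf : Fin N → ℤ) (y : Fin N → Fin (t + 1) → ℤ) : Prop :=
  (∀ j, y j 0 = yi j) ∧ (∀ j, y j (Fin.last t) = yf j) ∧
    (∀ j m, 0 ≤ y j m) ∧
    (∀ j, ∀ m : Fin t, y j m.succ = y j m.castSucc + 1 ∨ y j m.succ = y j m.castSucc - 1) ∧
    (∀ m, ∀ i j : Fin N, i < j → y i m < y j m)

/-- The one-wall `N`-walk generating function `Z̄^N_t(y^i → y^f)`. -/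
def Zbar (w : ℤ → ℤ → ℂ) (v : ℤ → ℂ) (N t : ℕ) (yi yf : Fin N → ℤ) : ℂ :=
  ∑ᶠ (y : Fin N → Fin (t + 1) → ℤ) (_ : barCond yi yf y), walkWeight w v y

/-- The Bethe Ansatz determinant built from a family of one-walk vectors. -/
def BA {K X : Type*} {N : ℕ} (φ : K → X → ℂ) (k : Fin N → K) (y : Fin N → X) : ℂ :=
  ∑ σ : Equiv.Perm (Fin N), ((Equiv.Perm.sign σ : ℤ) : ℂ) * ∏ a, φ (k (σ a)) (y a)

end

/- ========================  Auxiliary development (LGV)  ======================== -/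

noncomputable section GVProof
open Finset Equiv

namespace GV

variable {N t : ℕ}

/-- Single-walk weight. -/
def wt1 (w : ℤ → ℤ → ℂ) (v : ℤ → ℂ) (g : Fin (t + 1) → ℤ) : ℂ :=
  v (g 0) * ∏ m : Fin t, w (g m.castSucc) (g m.succ)

/-- Conditions for a single walk from `a` to `b` in the strip. -/
def okWalk (L : ℤ) (a b : ℤ) (g : Fin (t + 1) → ℤ) : Prop :=
  g 0 = a ∧ g (Fin.last t) = b ∧ (∀ m, 0 ≤ g m ∧ g m ≤ L) ∧
    ∀ m : Fin t, g m.succ = g m.castSucc + 1 ∨ g m.succ = g m.castSucc - 1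

def Om (L : ℤ) (N t : ℕ) : Finset (Fin N → Fin (t + 1) → ℤ) :=
  Fintype.piFinset (fun _ : Fin N => Fintype.piFinset (fun _ : Fin (t + 1) => Finset.Icc 0 L))

def noCross (y : Fin N → Fin (t + 1) → ℤ) : Prop :=
  ∀ (m : Fin (t + 1)) (i j : Fin N), i ≠ j → y i m ≠ y j m

lemma walkWeight_eq_prod_wt1 (w : ℤ → ℤ → ℂ) (v : ℤ → ℂ) (y : Fin N → Fin (t + 1) → ℤ) :
    walkWeight w v y = ∏ j, wt1 w v (y j) := by
  unfold walkWeight wt1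
  rw [Finset.prod_mul_distrib, Finset.prod_comm]

lemma Zgen_one (L : ℤ) (w : ℤ → ℤ → ℂ) (v : ℤ → ℂ) (t : ℕ) (a b : ℤ) :
    Zgen L w v 1 t (fun _ => a) (fun _ => b) =
      ∑ g ∈ (Fintype.piFinset (fun _ : Fin (t + 1) => Finset.Icc 0 L)).filter (okWalk L a b),
        wt1 w v g := by
  unfold Zgen
  refine Finset.sum_nbij' (fun y => y 0) (fun g => fun _ => g) ?_ ?_ ?_ ?_ ?_
  · intro y hy
    simp only [Finset.mem_filter, Fintype.mem_piFinset, stripCond, okWalk, Fin.forall_fin_one,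
      Finset.mem_Icc] at hy ⊢
    obtain ⟨hb, h0, hl, hbd, hst, -⟩ := hy
    exact ⟨hb, h0, hl, hbd, hst⟩
  · intro g hg
    simp only [Finset.mem_filter, Fintype.mem_piFinset, stripCond, okWalk, Fin.forall_fin_one,
      Finset.mem_Icc] at hg ⊢
    obtain ⟨hb, h0, hl, hbd, hst⟩ := hg
    exact ⟨hb, h0, hl, hbd, hst, fun m h => absurd h (lt_irrefl 0)⟩
  · intro y _; funext j; exact congrArg y (Subsingleton.elim _ _)
  · intro g _; rfl
  · intro y _; simp [walkWeight, wt1]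

def okFam (L : ℤ) (σ : Equiv.Perm (Fin N)) (yi yf : Fin N → ℤ)
    (y : Fin N → Fin (t + 1) → ℤ) : Prop :=
  ∀ j, okWalk L (yi (σ j)) (yf j) (y j)

lemma det_expand (L : ℤ) (w : ℤ → ℤ → ℂ) (v : ℤ → ℂ) (N t : ℕ) (yi yf : Fin N → ℤ) :
    Matrix.det (Matrix.of fun a b : Fin N =>
        Zgen L w v 1 t (fun _ => yi a) (fun _ => yf b)) =
      ∑ σ : Equiv.Perm (Fin N), ∑ y ∈ (Om L N t).filter (okFam L σ yi yf),
        ((Equiv.Perm.sign σ : ℤ) : ℂ) * ∏ j, wt1 w v (y j) := by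
  rw [Matrix.det_apply']
  refine Finset.sum_congr rfl fun σ _ => ?_
  rw [← Finset.mul_sum]
  congr 1
  simp only [Matrix.of_apply]
  simp_rw [Zgen_one]
  rw [Finset.prod_univ_sum]
  refine Finset.sum_congr ?_ fun y _ => rfl
  ext y
  simp only [Fintype.mem_piFinset, Finset.mem_filter, Om, okFam, forall_and]

lemma double_sum {α β γ : Type*} [Fintype α] [AddCommMonoid γ] (s : Finset β)
    (P : α → β → Prop) (f : α → β → γ) :
    ∑ a : α, ∑ b ∈ s.filter (P a), f a b
      = ∑ q ∈ (Finset.univ ×ˢ s).filter (fun q => P q.1 q.2), f q.1 q.2 := by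
  rw [Finset.sum_filter, Finset.sum_product]
  simp_rw [Finset.sum_filter]

/-! ### The tail-swap involution -/

def swY (i0 j0 : Fin N) (m0 : Fin (t + 1)) (y : Fin N → Fin (t + 1) → ℤ) :
    Fin N → Fin (t + 1) → ℤ :=
  fun k m => y (if m ≤ m0 then Equiv.swap i0 j0 k else k) m

variable {i0 j0 : Fin N} {m0 : Fin (t + 1)} {y : Fin N → Fin (t + 1) → ℤ}

lemma swY_le {m : Fin (t + 1)} (h : m ≤ m0) (k : Fin N) :
    swY i0 j0 m0 y k m = y (Equiv.swap i0 j0 k) m := by simp [swY, h]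

lemma swY_ge (hco : y i0 m0 = y j0 m0) {m : Fin (t + 1)} (h : m0 ≤ m) (k : Fin N) :
    swY i0 j0 m0 y k m = y k m := by
  unfold swY
  split_ifs with h'
  · have hm : m = m0 := le_antisymm h' h
    subst hm
    rcases eq_or_ne k i0 with rfl | h1
    · rw [Equiv.swap_apply_left]; exact hco.symm
    rcases eq_or_ne k j0 with rfl | h2
    · rw [Equiv.swap_apply_right]; exact hco
    · rw [Equiv.swap_apply_of_ne_of_ne h1 h2]
  · rfl

lemma swY_invol : swY i0 j0 m0 (swY i0 j0 m0 y) = y := by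
  funext k m; unfold swY; split_ifs with h <;> simp

def cT (y : Fin N → Fin (t + 1) → ℤ) : Finset (Fin (t + 1)) :=
  Finset.univ.filter fun m => ∃ i j : Fin N, i ≠ j ∧ y i m = y j m

lemma cT_nonempty (h : ¬ noCross y) : (cT y).Nonempty := by
  unfold noCross at h; push_neg at h
  obtain ⟨m, i, j, hne, he⟩ := h
  exact ⟨m, by simp only [cT, Finset.mem_filter, Finset.mem_univ, true_and]; exact ⟨i, j, hne, he⟩⟩

lemma not_noCross_of_cT (h : (cT y).Nonempty) : ¬ noCross y := by
  obtain ⟨m, hm⟩ := h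
  simp only [cT, Finset.mem_filter, Finset.mem_univ, true_and] at hm
  obtain ⟨i, j, hne, he⟩ := hm
  exact fun hnc => hnc m i j hne he

lemma cT_swY : cT (swY i0 j0 m0 y) = cT y := by
  ext m
  simp only [cT, Finset.mem_filter, Finset.mem_univ, true_and]
  by_cases h : m ≤ m0
  · constructor
    · rintro ⟨i, j, hne, he⟩
      rw [swY_le h, swY_le h] at he
      exact ⟨_, _, fun hh => hne ((Equiv.swap i0 j0).injective hh), he⟩
    · rintro ⟨i, j, hne, he⟩
      refine ⟨Equiv.swap i0 j0 i, Equiv.swap i0 j0 j,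
        fun hh => hne ((Equiv.swap i0 j0).injective hh), ?_⟩
      rw [swY_le h, swY_le h, Equiv.swap_apply_self, Equiv.swap_apply_self]
      exact he
  · have he : ∀ k, swY i0 j0 m0 y k m = y k m := fun k => by simp [swY, h]
    simp_rw [he]

def m0F (y : Fin N → Fin (t + 1) → ℤ) (h : ¬ noCross y) : Fin (t + 1) :=
  (cT y).min' (cT_nonempty h)

lemma m0F_mem (h : ¬ noCross y) :
    ∃ i j : Fin N, i ≠ j ∧ y i (m0F y h) = y j (m0F y h) := by
  have := (cT y).min'_mem (cT_nonempty h)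
  exact (Finset.mem_filter.1 this).2

def iS (y : Fin N → Fin (t + 1) → ℤ) (m : Fin (t + 1)) : Finset (Fin N) :=
  Finset.univ.filter fun i => ∃ j, j ≠ i ∧ y i m = y j m

lemma iS_nonempty (h : ¬ noCross y) : (iS y (m0F y h)).Nonempty := by
  obtain ⟨i, j, hne, he⟩ := m0F_mem h
  refine ⟨i, ?_⟩
  simp only [iS, Finset.mem_filter, Finset.mem_univ, true_and]
  exact ⟨j, hne.symm, he⟩

def i0F (y : Fin N → Fin (t + 1) → ℤ) (h : ¬ noCross y) : Fin N :=
  (iS y (m0F y h)).min' (iS_nonempty h)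

lemma i0F_spec (h : ¬ noCross y) :
    ∃ j, j ≠ i0F y h ∧ y (i0F y h) (m0F y h) = y j (m0F y h) := by
  have := (iS y (m0F y h)).min'_mem (iS_nonempty h)
  exact (Finset.mem_filter.1 this).2

def jS (y : Fin N → Fin (t + 1) → ℤ) (m : Fin (t + 1)) (i : Fin N) : Finset (Fin N) :=
  Finset.univ.filter fun j => j ≠ i ∧ y i m = y j m

lemma jS_nonempty (h : ¬ noCross y) : (jS y (m0F y h) (i0F y h)).Nonempty := by
  obtain ⟨j, hne, he⟩ := i0F_spec h
  exact ⟨j, by simp only [jS, Finset.mem_filter, Finset.mem_univ, true_and]; exact ⟨hne, he⟩⟩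

def j0F (y : Fin N → Fin (t + 1) → ℤ) (h : ¬ noCross y) : Fin N :=
  (jS y (m0F y h) (i0F y h)).min' (jS_nonempty h)

lemma j0F_spec (h : ¬ noCross y) :
    j0F y h ≠ i0F y h ∧ y (i0F y h) (m0F y h) = y (j0F y h) (m0F y h) := by
  have := (jS y (m0F y h) (i0F y h)).min'_mem (jS_nonempty h)
  exact (Finset.mem_filter.1 this).2

lemma i0F_ne_j0F (h : ¬ noCross y) : i0F y h ≠ j0F y h := (j0F_spec h).1.symm

lemma coincide (h : ¬ noCross y) : y (i0F y h) (m0F y h) = y (j0F y h) (m0F y h) :=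
  (j0F_spec h).2

def gswap (y : Fin N → Fin (t + 1) → ℤ) (h : ¬ noCross y) : Fin N → Fin (t + 1) → ℤ :=
  swY (i0F y h) (j0F y h) (m0F y h) y

lemma min'_congr {α : Type*} [LinearOrder α] {s u : Finset α} (h : s = u)
    (hs : s.Nonempty) (hu : u.Nonempty) : s.min' hs = u.min' hu := by subst h; rfl

lemma not_noCross_gswap (h : ¬ noCross y) : ¬ noCross (gswap y h) := by
  apply not_noCross_of_cT
  rw [gswap, cT_swY]
  exact cT_nonempty h

lemma m0F_gswap (h : ¬ noCross y) (h' : ¬ noCross (gswap y h)) :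
    m0F (gswap y h) h' = m0F y h :=
  min'_congr (by rw [gswap, cT_swY]) _ _

lemma slice_gswap (h : ¬ noCross y) (k : Fin N) :
    gswap y h k (m0F y h) = y k (m0F y h) :=
  swY_ge (coincide h) (le_refl _) k

lemma i0F_gswap (h : ¬ noCross y) (h' : ¬ noCross (gswap y h)) :
    i0F (gswap y h) h' = i0F y h := by
  refine min'_congr ?_ _ _
  rw [m0F_gswap h h']
  ext i
  simp only [iS, Finset.mem_filter, Finset.mem_univ, true_and]
  simp_rw [slice_gswap h]

lemma j0F_gswap (h : ¬ noCross y) (h' : ¬ noCross (gswap y h)) :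
    j0F (gswap y h) h' = j0F y h := by
  refine min'_congr ?_ _ _
  rw [m0F_gswap h h', i0F_gswap h h']
  ext j
  simp only [jS, Finset.mem_filter, Finset.mem_univ, true_and]
  simp_rw [slice_gswap h]

lemma gswap_invol (h : ¬ noCross y) (h' : ¬ noCross (gswap y h)) :
    gswap (gswap y h) h' = y := by
  rw [gswap, m0F_gswap h h', i0F_gswap h h', j0F_gswap h h']
  exact swY_invol

lemma prod_wt1_swY (w : ℤ → ℤ → ℂ) (v : ℤ → ℂ) (hco : y i0 m0 = y j0 m0) :
    ∏ j, wt1 w v (swY i0 j0 m0 y j) = ∏ j, wt1 w v (y j) := by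
  rw [← walkWeight_eq_prod_wt1, ← walkWeight_eq_prod_wt1]
  unfold walkWeight
  congr 1
  · rw [← Equiv.prod_comp (Equiv.swap i0 j0) (fun k => v (y k 0))]
    exact Finset.prod_congr rfl fun k _ => by rw [swY_le (Fin.zero_le m0)]
  · refine Finset.prod_congr rfl fun m _ => ?_
    by_cases hm : m.succ ≤ m0
    · have hm' : m.castSucc ≤ m0 := le_trans (Fin.castSucc_le_succ m) hm
      rw [← Equiv.prod_comp (Equiv.swap i0 j0) (fun k => w (y k m.castSucc) (y k m.succ))]
      exact Finset.prod_congr rfl fun k _ => by rw [swY_le hm', swY_le hm]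
    · have hm' : m0 ≤ m.castSucc := Fin.le_castSucc_iff.2 (lt_of_not_ge hm)
      have hm'' : m0 ≤ m.succ := le_trans hm' (Fin.castSucc_le_succ m)
      exact Finset.prod_congr rfl fun k _ => by rw [swY_ge hco hm', swY_ge hco hm'']

lemma okFam_swY {L : ℤ} {σ : Equiv.Perm (Fin N)} {yi yf : Fin N → ℤ}
    (hij : i0 ≠ j0) (hco : y i0 m0 = y j0 m0) (hok : okFam L σ yi yf y) :
    okFam L (σ * Equiv.swap i0 j0) yi yf (swY i0 j0 m0 y) := by
  intro k
  refine ⟨?_, ?_, ?_, ?_⟩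
  · rw [swY_le (Fin.zero_le m0)]
    exact (hok (Equiv.swap i0 j0 k)).1
  · rw [swY_ge hco (Fin.le_last m0)]
    exact (hok k).2.1
  · intro m
    unfold swY
    split_ifs with h
    · exact (hok _).2.2.1 m
    · exact (hok _).2.2.1 m
  · intro m
    by_cases hm : m.succ ≤ m0
    · have hm' : m.castSucc ≤ m0 := le_trans (Fin.castSucc_le_succ m) hm
      rw [swY_le hm', swY_le hm]
      exact (hok _).2.2.2 m
    · have hm' : m0 ≤ m.castSucc := Fin.le_castSucc_iff.2 (lt_of_not_ge hm)
      have hm'' : m0 ≤ m.succ := le_trans hm' (Fin.castSucc_le_succ m)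
      rw [swY_ge hco hm', swY_ge hco hm'']
      exact (hok _).2.2.2 m

lemma mem_Om_swY {L : ℤ} (hy : y ∈ Om L N t) : swY i0 j0 m0 y ∈ Om L N t := by
  simp only [Om, Fintype.mem_piFinset] at hy ⊢
  intro k m
  unfold swY
  split_ifs <;> exact hy _ _

/-! ### Ordering of non-crossing families -/

lemma even_diff {y : Fin N → Fin (t + 1) → ℤ}
    (hst : ∀ j : Fin N, ∀ m : Fin t,
      y j m.succ = y j m.castSucc + 1 ∨ y j m.succ = y j m.castSucc - 1)
    (i j : Fin N) (h0 : Even (y j 0 - y i 0)) : ∀ m, Even (y j m - y i m) := by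
  intro m
  induction m using Fin.induction with
  | zero => exact h0
  | succ m ih =>
    rw [Int.even_iff] at ih ⊢
    rcases hst i m with h1 | h1 <;> rcases hst j m with h2 | h2 <;> omega

lemma pos_everywhere {d : Fin (t + 1) → ℤ} (hne : ∀ m, d m ≠ 0) (hev : ∀ m, Even (d m))
    (hstep : ∀ m : Fin t, d m.succ - d m.castSucc = 2 ∨ d m.succ - d m.castSucc = 0 ∨
      d m.succ - d m.castSucc = -2)
    (hl : 0 < d (Fin.last t)) : ∀ m, 0 < d m := by
  intro m
  induction m using Fin.reverseInduction with
  | last => exact hl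
  | cast m ih =>
    have h1 := hne m.castSucc
    have h2 := hev m.castSucc
    have h3 := hev m.succ
    rw [Int.even_iff] at h2 h3
    rcases hstep m with h | h | h <;> omega

lemma order_all {y : Fin N → Fin (t + 1) → ℤ}
    (hst : ∀ j : Fin N, ∀ m : Fin t,
      y j m.succ = y j m.castSucc + 1 ∨ y j m.succ = y j m.castSucc - 1)
    (hnc : noCross y)
    (hpar : ∀ i j : Fin N, Even (y j 0 - y i 0))
    (hend : ∀ i j : Fin N, i < j → y i (Fin.last t) < y j (Fin.last t)) :
    ∀ m (i j : Fin N), i < j → y i m < y j m := by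
  intro m i j hij
  have key : ∀ m, 0 < y j m - y i m := by
    refine pos_everywhere (fun m => sub_ne_zero.2 (hnc m j i hij.ne')) (even_diff hst i j (hpar i j)) ?_ (sub_pos.2 (hend i j hij))
    intro m
    rcases hst i m with h1 | h1 <;> rcases hst j m with h2 | h2 <;> omega
  linarith [key m]

lemma perm_eq_one {σ : Equiv.Perm (Fin N)} {yi : Fin N → ℤ}
    (hyi : ∀ i j : Fin N, i < j → yi i < yi j)
    (h : ∀ i j : Fin N, i < j → yi (σ i) < yi (σ j)) : σ = 1 := by
  have hm : StrictMono (⇑σ) := by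
    intro a b hab
    rcases lt_trichotomy (σ a) (σ b) with h' | h' | h'
    · exact h'
    · exact absurd (σ.injective h') hab.ne
    · exact absurd (h a b hab) (not_lt.2 (hyi _ _ h').le)
  ext k
  have h1 : ((StrictMono.orderIsoOfSurjective (⇑σ) hm σ.surjective k : Fin N) : ℕ) = (k : ℕ) :=
    Fin.coe_orderIso_apply _ k
  rw [congrFun (StrictMono.coe_orderIsoOfSurjective (⇑σ) hm σ.surjective) k] at h1
  simpa using h1

lemma Sp_even_sub {L : ℤ} {q : Bool} {a b : ℤ} (ha : a ∈ Sp L q) (hb : b ∈ Sp L q) :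
    Even (a - b) := by
  cases q <;>
    simp only [Sp, SetO, SetE, if_true, if_false, Finset.mem_filter, Bool.false_eq_true,
      cond_false, cond_true] at ha hb
  · exact ha.2.sub hb.2
  · exact ha.2.sub_odd hb.2

end GV
end GVProof

/-- Gessel–Viennot determinant via the Bethe Ansatz (Theorem 2): the
`N`-walk strip generating function is the determinant of one-walk strip generating
functions. Parity is encoded by a Boolean: `true ↦ odd`, `false ↦ even`. -/
theorem Zgen_gessel_viennot (L : ℤ) (hL : Odd L) (hL1 : 1 ≤ L) (w : ℤ → ℤ → ℂ) (v : ℤ → ℂ)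
    (K : Type*) [Fintype K] [LinearOrder K] (hK : Fintype.card K = ((L + 1) / 2).toNat)
    (φ ψ : Bool → K → ℤ → ℂ) (lam : K → ℂ)
    (heo : ∀ k, ∀ y ∈ SetE L, ∑ y' ∈ SetO L, T1 w y y' * φ true k y' = lam k * φ false k y)
    (hoe : ∀ k, ∀ y ∈ SetO L, ∑ y' ∈ SetE L, T1 w y y' * φ false k y' = lam k * φ true k y)
    (hort : ∀ (p : Bool) (k k' : K),
      ∑ y ∈ Sp L p, star (ψ p k y) * φ p k' y = if k = k' then 1 else 0)
    (hcomp : ∀ (p : Bool), ∀ y ∈ Sp L p, ∀ y' ∈ Sp L p,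
      ∑ k : K, φ p k y * star (ψ p k y') = if y = y' then 1 else 0)
    (N : ℕ) (hN : 1 ≤ N) (t : ℕ) (p : Bool) (yi yf : Fin N → ℤ)
    (hyi : yi ∈ UU (Sp L (if Even t then p else !p)) N) (hyf : yf ∈ UU (Sp L p) N) :
    Zgen L w v N t yi yf =
      Matrix.det (Matrix.of fun a b : Fin N =>
        Zgen L w v 1 t (fun _ => yi a) (fun _ => yf b)) := by
  classical
  simp only [UU, Finset.mem_filter, Fintype.mem_piFinset] at hyi hyf
  obtain ⟨hyiP, hyiM⟩ := hyi
  obtain ⟨hyfP, hyfM⟩ := hyf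
  rw [GV.det_expand L w v N t yi yf]
  have hsplit : ∀ σ : Equiv.Perm (Fin N),
      (∑ y ∈ (GV.Om L N t).filter (GV.okFam L σ yi yf),
        ((Equiv.Perm.sign σ : ℤ) : ℂ) * ∏ j, GV.wt1 w v (y j))
      = (∑ y ∈ (GV.Om L N t).filter (fun y => GV.okFam L σ yi yf y ∧ GV.noCross y),
          ((Equiv.Perm.sign σ : ℤ) : ℂ) * ∏ j, GV.wt1 w v (y j))
        + ∑ y ∈ (GV.Om L N t).filter (fun y => GV.okFam L σ yi yf y ∧ ¬ GV.noCross y),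
          ((Equiv.Perm.sign σ : ℤ) : ℂ) * ∏ j, GV.wt1 w v (y j) := by
    intro σ
    rw [← Finset.sum_filter_add_sum_filter_not
      ((GV.Om L N t).filter (GV.okFam L σ yi yf)) GV.noCross, Finset.filter_filter,
      Finset.filter_filter]
  have e1 : ∑ σ : Equiv.Perm (Fin N), ∑ y ∈ (GV.Om L N t).filter (GV.okFam L σ yi yf),
        ((Equiv.Perm.sign σ : ℤ) : ℂ) * ∏ j, GV.wt1 w v (y j)
      = (∑ σ : Equiv.Perm (Fin N),
          ∑ y ∈ (GV.Om L N t).filter (fun y => GV.okFam L σ yi yf y ∧ GV.noCross y),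
          ((Equiv.Perm.sign σ : ℤ) : ℂ) * ∏ j, GV.wt1 w v (y j))
        + ∑ σ : Equiv.Perm (Fin N),
          ∑ y ∈ (GV.Om L N t).filter (fun y => GV.okFam L σ yi yf y ∧ ¬ GV.noCross y),
          ((Equiv.Perm.sign σ : ℤ) : ℂ) * ∏ j, GV.wt1 w v (y j) := by
    rw [← Finset.sum_add_distrib]
    exact Finset.sum_congr rfl fun σ _ => hsplit σ
  have hzero : ∑ σ : Equiv.Perm (Fin N),
      ∑ y ∈ (GV.Om L N t).filter (fun y => GV.okFam L σ yi yf y ∧ ¬ GV.noCross y),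
        ((Equiv.Perm.sign σ : ℤ) : ℂ) * ∏ j, GV.wt1 w v (y j) = 0 := by
    have hd : (∑ σ : Equiv.Perm (Fin N),
          ∑ y ∈ (GV.Om L N t).filter (fun y => GV.okFam L σ yi yf y ∧ ¬ GV.noCross y),
          ((Equiv.Perm.sign σ : ℤ) : ℂ) * ∏ j, GV.wt1 w v (y j))
        = ∑ q ∈ (Finset.univ ×ˢ GV.Om L N t).filter
            (fun q => GV.okFam L q.1 yi yf q.2 ∧ ¬ GV.noCross q.2),
          ((Equiv.Perm.sign q.1 : ℤ) : ℂ) * ∏ j, GV.wt1 w v (q.2 j) := by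
      rw [Finset.sum_filter (s := Finset.univ ×ˢ GV.Om L N t), Finset.sum_product]
      simp_rw [Finset.sum_filter]
    rw [hd]
    refine Finset.sum_involution
      (fun q hq => (q.1 * Equiv.swap (GV.i0F q.2 (Finset.mem_filter.1 hq).2.2)
          (GV.j0F q.2 (Finset.mem_filter.1 hq).2.2),
        GV.gswap q.2 (Finset.mem_filter.1 hq).2.2)) ?_ ?_ ?_ ?_
    · intro q hq
      have h0 : ¬ GV.noCross q.2 := (Finset.mem_filter.1 hq).2.2
      have hw : ∏ j, GV.wt1 w v (GV.gswap q.2 h0 j) = ∏ j, GV.wt1 w v (q.2 j) :=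
        GV.prod_wt1_swY w v (GV.coincide h0)
      simp only [hw, Equiv.Perm.sign_mul, Equiv.Perm.sign_swap (GV.i0F_ne_j0F h0),
        Units.val_mul, Int.cast_mul]
      push_cast
      ring
    · intro q hq _
      intro heq
      have h0 : ¬ GV.noCross q.2 := (Finset.mem_filter.1 hq).2.2
      have h1 := congrArg Prod.fst heq
      simp only at h1
      rw [mul_eq_left] at h1
      exact GV.i0F_ne_j0F h0 (Equiv.swap_eq_one_iff.1 h1)
    · intro q hq
      have h0 : ¬ GV.noCross q.2 := (Finset.mem_filter.1 hq).2.2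
      have hmem := (Finset.mem_filter.1 hq).1
      have hok : GV.okFam L q.1 yi yf q.2 := (Finset.mem_filter.1 hq).2.1
      refine Finset.mem_filter.2 ⟨Finset.mem_product.2
        ⟨Finset.mem_univ _, GV.mem_Om_swY (Finset.mem_product.1 hmem).2⟩, ?_, ?_⟩
      · exact GV.okFam_swY (GV.i0F_ne_j0F h0) (GV.coincide h0) hok
      · exact GV.not_noCross_gswap h0
    · intro q hq
      have h0 : ¬ GV.noCross q.2 := (Finset.mem_filter.1 hq).2.2
      refine Prod.ext ?_ ?_
      · show q.1 * Equiv.swap (GV.i0F q.2 h0) (GV.j0F q.2 h0) *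
          Equiv.swap (GV.i0F (GV.gswap q.2 h0) _) (GV.j0F (GV.gswap q.2 h0) _) = q.1
        rw [GV.i0F_gswap h0, GV.j0F_gswap h0, mul_assoc, Equiv.swap_mul_self, mul_one]
      · exact GV.gswap_invol h0 _
  have hmain : ∑ σ : Equiv.Perm (Fin N),
      ∑ y ∈ (GV.Om L N t).filter (fun y => GV.okFam L σ yi yf y ∧ GV.noCross y),
        ((Equiv.Perm.sign σ : ℤ) : ℂ) * ∏ j, GV.wt1 w v (y j)
      = Zgen L w v N t yi yf := by
    have hperm : ∀ σ : Equiv.Perm (Fin N), ∀ y ∈ (GV.Om L N t).filter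
        (fun y => GV.okFam L σ yi yf y ∧ GV.noCross y), σ = 1 := by
      intro σ y hy
      have hok : GV.okFam L σ yi yf y := (Finset.mem_filter.1 hy).2.1
      have hnc : GV.noCross y := (Finset.mem_filter.1 hy).2.2
      have hst : ∀ j : Fin N, ∀ m : Fin t,
          y j m.succ = y j m.castSucc + 1 ∨ y j m.succ = y j m.castSucc - 1 :=
        fun j => (hok j).2.2.2
      have hord := GV.order_all hst hnc
        (fun i j => by
          rw [(hok i).1, (hok j).1]
          exact GV.Sp_even_sub (hyiP (σ j)) (hyiP (σ i)))
        (fun i j hij => by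
          rw [(hok i).2.1, (hok j).2.1]
          exact hyfM i j hij)
      refine GV.perm_eq_one hyiM fun i j hij => ?_
      have := hord 0 i j hij
      rwa [(hok i).1, (hok j).1] at this
    rw [Finset.sum_eq_single_of_mem 1 (Finset.mem_univ 1)
      (fun σ _ hσ => Finset.sum_eq_zero fun y hy => absurd (hperm σ y hy) hσ)]
    have hset : (GV.Om L N t).filter (fun y => GV.okFam L 1 yi yf y ∧ GV.noCross y)
        = (GV.Om L N t).filter (stripCond L yi yf) := by
      ext y
      simp only [Finset.mem_filter, and_congr_right_iff]
      intro _
      constructor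
      · rintro ⟨hok, hnc⟩
        have hst : ∀ j : Fin N, ∀ m : Fin t,
            y j m.succ = y j m.castSucc + 1 ∨ y j m.succ = y j m.castSucc - 1 :=
          fun j => (hok j).2.2.2
        refine ⟨fun j => by simpa using (hok j).1, fun j => (hok j).2.1,
          fun j m => (hok j).2.2.1 m, hst, ?_⟩
        refine GV.order_all hst hnc
          (fun i j => by
            have h1 : y j 0 = yi j := by simpa using (hok j).1
            have h2 : y i 0 = yi i := by simpa using (hok i).1
            rw [h1, h2]
            exact GV.Sp_even_sub (hyiP j) (hyiP i))
          (fun i j hij => by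
            rw [(hok i).2.1, (hok j).2.1]
            exact hyfM i j hij)
      · rintro ⟨h1, h2, h3, h4, h5⟩
        refine ⟨fun j => ⟨by simpa using h1 j, h2 j, fun m => h3 j m, h4 j⟩, ?_⟩
        intro m i j hne
        rcases hne.lt_or_gt with h | h
        · exact (h5 m i j h).ne
        · exact (h5 m j i h).ne'
    rw [hset]
    unfold Zgen
    refine Finset.sum_congr rfl fun y _ => ?_
    rw [GV.walkWeight_eq_prod_wt1]
    simp
  rw [e1, hzero, add_zero]
  exact hmain.symm
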